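/- Let R be a discrete valuation ring with uniformizer π, and let R^{(1)} = {x ∈ R : ∃ n : ℕ, x − π^n ∈ (π^{n+1})} (the elements with angular component 1). Then the map sending (0, x) ↦ 1 + π·x for x ∈ R and (1, x) ↦ π·x for x ∈ R^{(1)} is a well-defined bijection from the disjoint union ({0} × R) ∪ ({1} × R^{(1)}) onto R^{(1)}. -/

import Mathlib

open Classical in
theorem disjoint_union_R_R1_bij (R : Type*) [CommRing R] [IsDomain R]
    [IsDiscreteValuationRing R] (π : R) (hπ : Irreducible π) :
    Set.BijOn (fun q : R × R => if q.1 = 0 then 1 + π * q.2 else π * q.2)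
      (({0} ×ˢ (Set.univ : Set R)) ∪
        ({1} ×ˢ {x : R | ∃ n : ℕ, x - π ^ n ∈ Ideal.span {π ^ (n + 1)}}))
      {x : R | ∃ n : ℕ, x - π ^ n ∈ Ideal.span {π ^ (n + 1)}} := by
  have h10 : (1 : R) ≠ 0 := one_ne_zero
  have hπ0 : π ≠ 0 := hπ.ne_zero
  refine ⟨?_, ?_, ?_⟩
  · -- MapsTo
    rintro ⟨a, x⟩ hq
    simp only [Set.mem_union, Set.mem_prod, Set.mem_singleton_iff, Set.mem_univ,
      Set.mem_setOf_eq] at hq ⊢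
    rcases hq with ⟨rfl, -⟩ | ⟨rfl, n, hn⟩
    · refine ⟨0, ?_⟩
      simp only [eq_self_iff_true, if_true]
      rw [Ideal.mem_span_singleton]
      refine ⟨x, by ring⟩
    · rw [if_neg h10]
      rw [Ideal.mem_span_singleton] at hn
      obtain ⟨c, hc⟩ := hn
      refine ⟨n + 1, ?_⟩
      rw [Ideal.mem_span_singleton]
      exact ⟨c, by linear_combination π * hc⟩
  · -- InjOn
    rintro ⟨a, x⟩ ha ⟨b, y⟩ hb heq
    simp only [Set.mem_union, Set.mem_prod, Set.mem_singleton_iff, Set.mem_univ,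
      Set.mem_setOf_eq] at ha hb
    simp only at heq
    rcases ha with ⟨rfl, -⟩ | ⟨rfl, -⟩ <;> rcases hb with ⟨rfl, -⟩ | ⟨rfl, -⟩
    · rw [if_pos rfl, if_pos rfl] at heq
      have : x = y := mul_left_cancel₀ hπ0 (by linear_combination heq)
      simp [this]
    · rw [if_pos rfl, if_neg h10] at heq
      exact absurd (IsUnit.of_mul_eq_one (a := π) (y - x) (by linear_combination -heq)) hπ.not_isUnit
    · rw [if_neg h10, if_pos rfl] at heq
      exact absurd (IsUnit.of_mul_eq_one (a := π) (x - y) (by linear_combination heq)) hπ.not_isUnit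
    · rw [if_neg h10, if_neg h10] at heq
      have : x = y := mul_left_cancel₀ hπ0 heq
      simp [this]
  · -- SurjOn
    rintro y ⟨n, hn⟩
    rw [Ideal.mem_span_singleton] at hn
    obtain ⟨c, hc⟩ := hn
    cases n with
    | zero =>
      refine ⟨(0, c), Or.inl ⟨rfl, trivial⟩, ?_⟩
      simp only [eq_self_iff_true, if_true]
      linear_combination -hc
    | succ m =>
      refine ⟨(1, π ^ m + π ^ (m + 1) * c), Or.inr ⟨rfl, ⟨m, ?_⟩⟩, ?_⟩
      · rw [Ideal.mem_span_singleton]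
        exact ⟨c, by ring⟩
      · simp only [if_neg h10]
        linear_combination -hc
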